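/- The sketch-and-project error vectors remain in the range of B^{-1} Aᵀ: if x⁰ ∈ range(B^{-1} Aᵀ) and x* is the B-norm least-norm solution of A x = b, then every iterate x^k of the sketch-and-project method satisfies x^k − x* ∈ range(B^{-1} Aᵀ). -/

import Mathlib

open Matrix BigOperators

/-- The four Penrose equations characterizing the Moore–Penrose pseudoinverse `P` of `M`. -/
def PenroseInv {k : ℕ} (M P : Matrix (Fin k) (Fin k) ℝ) : Prop :=
  M * P * M = M ∧ P * M * P = P ∧ (M * P)ᵀ = M * P ∧ (P * M)ᵀ = P * M

/-- The projection matrix `Z = B^{-1/2} Aᵀ S (Sᵀ A B⁻¹ Aᵀ S)† Sᵀ A B^{-1/2}`, where `Bh`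
plays the role of `B^{1/2}` and `P` that of the pseudoinverse `(Sᵀ A B⁻¹ Aᵀ S)†`. -/
noncomputable def Zmat {m n τ : ℕ} (A : Matrix (Fin m) (Fin n) ℝ) (B Bh : Matrix (Fin n) (Fin n) ℝ)
    (S : Matrix (Fin m) (Fin τ) ℝ) (P : Matrix (Fin τ) (Fin τ) ℝ) :
    Matrix (Fin n) (Fin n) ℝ :=
  Bh⁻¹ * Aᵀ * (S * P * Sᵀ) * A * Bh⁻¹

/-- If `v` is orthogonal to the kernel of `A`, then `v` lies in the range of `Aᵀ`. -/
lemma mem_range_transpose_of_orth {m n : ℕ} (A : Matrix (Fin m) (Fin n) ℝ) (v : Fin n → ℝ)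
    (hv : ∀ z, A.mulVec z = 0 → z ⬝ᵥ v = 0) : v ∈ Set.range (Aᵀ).mulVec := by
  classical
  let L : EuclideanSpace ℝ (Fin n) →ₗ[ℝ] EuclideanSpace ℝ (Fin m) := Matrix.toEuclideanLin A
  let Lt : EuclideanSpace ℝ (Fin m) →ₗ[ℝ] EuclideanSpace ℝ (Fin n) := Matrix.toEuclideanLin Aᵀ
  have hLapp : ∀ z : EuclideanSpace ℝ (Fin n), L z = A.mulVec z := fun z => rfl
  have hLtapp : ∀ w : EuclideanSpace ℝ (Fin m), Lt w = (Aᵀ).mulVec w := fun w => rfl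
  have hinner : ∀ (x y : EuclideanSpace ℝ (Fin n)), inner ℝ x y = (x : Fin n → ℝ) ⬝ᵥ y := by
    intro x y
    simp [PiLp.inner_apply, dotProduct, RCLike.inner_apply, mul_comm]
  have hinnerm : ∀ (x y : EuclideanSpace ℝ (Fin m)), inner ℝ x y = (x : Fin m → ℝ) ⬝ᵥ y := by
    intro x y
    simp [PiLp.inner_apply, dotProduct, RCLike.inner_apply, mul_comm]
  have horth : (LinearMap.range Lt)ᗮ = LinearMap.ker L := by
    ext z
    constructor
    · intro hz
      have h : ∀ w : EuclideanSpace ℝ (Fin m), (w : Fin m → ℝ) ⬝ᵥ (A.mulVec z) = 0 := by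
        intro w
        have := hz (Lt w) ⟨w, rfl⟩
        rw [hinner, hLtapp] at this
        have h2 : ((Aᵀ).mulVec w) ⬝ᵥ z = (w : Fin m → ℝ) ⬝ᵥ (A.mulVec z) := by
          rw [Matrix.mulVec_transpose, Matrix.dotProduct_mulVec]
        rw [h2] at this
        exact this
      have : A.mulVec z = 0 := by
        funext i
        have := h (WithLp.toLp 2 (Pi.single i 1))
        simpa [dotProduct, Pi.single_apply] using this
      exact LinearMap.mem_ker.mpr (by ext i; simp [hLapp, this])
    · intro hz
      intro u hu
      obtain ⟨w, rfl⟩ := hu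
      rw [hinner, hLtapp]
      have h2 : ((Aᵀ).mulVec w) ⬝ᵥ z = (w : Fin m → ℝ) ⬝ᵥ (A.mulVec z) := by
        rw [Matrix.mulVec_transpose, Matrix.dotProduct_mulVec]
      rw [h2]
      have hz0 : A.mulVec z = 0 := by
        have := congrArg WithLp.ofLp (LinearMap.mem_ker.mp hz)
        rw [hLapp] at this
        simpa using this
      rw [hz0]
      simp
  have hrange : LinearMap.range Lt = (LinearMap.ker L)ᗮ := by
    rw [← horth, Submodule.orthogonal_orthogonal]
  have hvmem : (WithLp.toLp 2 v : EuclideanSpace ℝ (Fin n)) ∈ (LinearMap.ker L)ᗮ := by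
    intro z hz
    rw [hinner]
    exact hv z.ofLp (by
      have := congrArg WithLp.ofLp (LinearMap.mem_ker.mp hz)
      rw [hLapp] at this
      simpa using this)
  rw [← hrange] at hvmem
  obtain ⟨w, hw⟩ := hvmem
  exact ⟨w.ofLp, by rw [← hLtapp, hw]⟩

/-- Sketch-and-project error vectors remain in `range(B⁻¹ Aᵀ)`: if `x⁰ ∈ range(B⁻¹ Aᵀ)`
and `x*` is the B-norm least-norm solution of `A x = b`, then every iterate satisfies
`x^k − x* ∈ range(B⁻¹ Aᵀ)`. -/
theorem iterates_error_in_range {m n τ : ℕ}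
    (A : Matrix (Fin m) (Fin n) ℝ) (b : Fin m → ℝ)
    (B : Matrix (Fin n) (Fin n) ℝ) (hB : B.PosDef)
    (S : ℕ → Matrix (Fin m) (Fin τ) ℝ) (P : ℕ → Matrix (Fin τ) (Fin τ) ℝ)
    (hP : ∀ k, PenroseInv ((S k)ᵀ * A * B⁻¹ * Aᵀ * S k) (P k))
    (xs : Fin n → ℝ) (hxs : A.mulVec xs = b)
    (hmin : ∀ y, A.mulVec y = b → xs ⬝ᵥ B.mulVec xs ≤ y ⬝ᵥ B.mulVec y)
    (x : ℕ → Fin n → ℝ)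
    (hx0 : x 0 ∈ Set.range (B⁻¹ * Aᵀ).mulVec)
    (hupd : ∀ k, x (k + 1)
      = x k - (B⁻¹ * Aᵀ * (S k * P k * (S k)ᵀ)).mulVec (A.mulVec (x k) - b)) :
    ∀ k, x k - xs ∈ Set.range (B⁻¹ * Aᵀ).mulVec := by
  have hBsymm : Bᵀ = B := hB.1.eq
  have hBunit : IsUnit B.det := isUnit_iff_ne_zero.mpr (ne_of_gt hB.det_pos)
  -- xs ∈ range (B⁻¹ Aᵀ)
  have hkey : ∀ z, A.mulVec z = 0 → z ⬝ᵥ B.mulVec xs = 0 := by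
    intro z hz
    by_cases hz0 : z = 0
    · simp [hz0]
    set c := z ⬝ᵥ B.mulVec xs with hc
    set d := z ⬝ᵥ B.mulVec z with hd
    have hdpos : 0 < d := by
      have := hB.dotProduct_mulVec_pos hz0
      simpa [hd, dotProduct, star] using this
    have hsym : xs ⬝ᵥ B.mulVec z = c := by
      rw [Matrix.dotProduct_mulVec, ← Matrix.mulVec_transpose, hBsymm, hc,
        dotProduct_comm]
    have hineq : ∀ t : ℝ, 0 ≤ 2 * t * c + t ^ 2 * d := by
      intro t
      have hfeas : A.mulVec (xs + t • z) = b := by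
        rw [Matrix.mulVec_add, Matrix.mulVec_smul, hz, hxs]; simp
      have := hmin (xs + t • z) hfeas
      have hexp : (xs + t • z) ⬝ᵥ B.mulVec (xs + t • z)
          = xs ⬝ᵥ B.mulVec xs + 2 * t * c + t ^ 2 * d := by
        rw [Matrix.mulVec_add, Matrix.mulVec_smul, add_dotProduct,
          dotProduct_add, dotProduct_add, smul_dotProduct,
          dotProduct_smul, smul_dotProduct, dotProduct_smul, hsym]
        simp only [smul_eq_mul, ← hc, ← hd]
        ring
      rw [hexp] at this
      linarith
    have hne : d ≠ 0 := ne_of_gt hdpos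
    set t : ℝ := -c / d with htdef
    have ht : t * d = -c := div_mul_cancel₀ (-c) hne
    have hc' : c = -(t * d) := by linarith
    have h1 : 0 ≤ -(t ^ 2) * d := by
      have h2 := hineq t
      have h3 : 2 * t * c + t ^ 2 * d = -(t ^ 2) * d := by rw [hc']; ring
      linarith [h3 ▸ h2]
    have ht2 : t ^ 2 ≤ 0 := by nlinarith
    have ht0 : t = 0 := by
      have := le_antisymm ht2 (sq_nonneg t)
      exact pow_eq_zero_iff two_ne_zero |>.mp this
    rw [ht0] at ht
    linarith
  obtain ⟨w, hw⟩ := mem_range_transpose_of_orth A (B.mulVec xs) hkey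
  have hxsr : xs ∈ Set.range (B⁻¹ * Aᵀ).mulVec := by
    refine ⟨w, ?_⟩
    rw [← Matrix.mulVec_mulVec, hw, Matrix.mulVec_mulVec, Matrix.nonsing_inv_mul B hBunit,
      Matrix.one_mulVec]
  obtain ⟨w0, hw0⟩ := hx0
  intro k
  induction k with
  | zero =>
    obtain ⟨ws, hws⟩ := hxsr
    exact ⟨w0 - ws, by rw [Matrix.mulVec_sub, hw0, hws]⟩
  | succ k ih =>
    obtain ⟨u, hu⟩ := ih
    refine ⟨u - ((S k * P k * (S k)ᵀ)).mulVec (A.mulVec (x k) - b), ?_⟩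
    rw [Matrix.mulVec_sub, hu, hupd k, Matrix.mulVec_mulVec]
    abel
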